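/- arXiv:1311.3239 — 2 statements merged into one kernel-verified Lean document; each statement's English description precedes it below -/
import Mathlib

section
/- For all natural numbers m ≥ n, the Chebyshev polynomials of the second kind satisfy the linearization formula U_m(x)·U_n(x) = Σ_{k=0}^{n} U_{m-n+2k}(x). -/
open Polynomial Chebyshev Finset

private theorem chebyshev_U_key (R : Type*) [CommRing R] :
    ∀ n m : ℤ, Polynomial.Chebyshev.U R m * Polynomial.Chebyshev.U R n -
      Polynomial.Chebyshev.U R (m + 1) * Polynomial.Chebyshev.U R (n - 1) =
      Polynomial.Chebyshev.U R (m - n) := by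
  intro n
  induction n using Polynomial.Chebyshev.induct with
  | zero => intro m; simp
  | one =>
    intro m
    have h := U_add_one R m
    simp only [U_one, sub_self, U_zero, mul_one]
    linear_combination (norm := ring_nf) -h
  | add_two n ih1 ih2 =>
    intro m
    have h₁ := U_add_two R (n : ℤ)
    have h₂ := U_add_one R (n : ℤ)
    have h₃ := U_sub_two R (m - n)
    linear_combination (norm := ring_nf) 2 * (X : R[X]) * ih1 m - ih2 m +
      Polynomial.Chebyshev.U R m * h₁ - Polynomial.Chebyshev.U R (m + 1) * h₂ - h₃
  | neg_add_one n ih1 ih2 =>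
    intro m
    have h₁ := U_sub_two R (-(n : ℤ))
    have h₂ := U_sub_two R (-(n : ℤ) + 1)
    have h₃ := U_add_one R (m + n)
    linear_combination (norm := ring_nf) 2 * (X : R[X]) * ih1 m - ih2 m +
      Polynomial.Chebyshev.U R m * h₂ - Polynomial.Chebyshev.U R (m + 1) * h₁ - h₃

private theorem chebyshev_U_lin_aux (R : Type*) [CommRing R] :
    ∀ n : ℕ, ∀ m : ℤ, Polynomial.Chebyshev.U R m * Polynomial.Chebyshev.U R n =
      ∑ k ∈ Finset.range (n + 1), Polynomial.Chebyshev.U R (m - n + 2 * k) := by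
  intro n
  induction n with
  | zero => intro m; simp
  | succ n ih =>
    intro m
    have key := chebyshev_U_key R ((n : ℤ) + 1) m
    rw [Finset.sum_range_succ']
    have hs : ∑ k ∈ Finset.range (n + 1),
        Polynomial.Chebyshev.U R (m - (↑(n + 1) : ℤ) + 2 * ↑(k + 1)) =
        ∑ k ∈ Finset.range (n + 1), Polynomial.Chebyshev.U R (m + 1 - n + 2 * k) := by
      apply Finset.sum_congr rfl
      intro k _
      congr 1
      push_cast
      ring
    rw [hs, ← ih (m + 1)]
    have e1 : (n : ℤ) + 1 - 1 = n := by ring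
    rw [e1] at key
    push_cast at key ⊢
    linear_combination (norm := (push_cast; ring_nf)) key

/-- Linearization formula for Chebyshev polynomials of the second kind:
for `m ≥ n`, `U_m * U_n = ∑_{k=0}^{n} U_{m-n+2k}`. -/
theorem chebyshev_U_linearization (R : Type*) [CommRing R] (m n : ℕ) (h : n ≤ m) :
    Polynomial.Chebyshev.U R m * Polynomial.Chebyshev.U R n =
      ∑ k ∈ Finset.range (n + 1), Polynomial.Chebyshev.U R ((m : ℤ) - n + 2 * k) := by
  exact chebyshev_U_lin_aux R n m
end

section
/- The Mehler/Hille kernel formula for Hermite polynomials: for |s| < 1 and all real u, v, Σ_{n=0}^∞ H_n(u)·H_n(v)·s^n/(2^n·n!) = (1−s²)^{−1/2}·exp( (2uvs − (u²+v²)s²) / (1−s²) ), where H_n are the physicists' Hermite polynomials. -/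
open Real MeasureTheory
open scoped Complex ComplexConjugate ENNReal NNReal

local notation "I" => Complex.I

/-- The physicists' Hermite polynomials `H_n(x) = (-1)^n e^{x²} (d/dx)^n e^{-x²}`. -/
noncomputable def physHermite (n : ℕ) (x : ℝ) : ℝ :=
  (-1 : ℝ) ^ n * Real.exp (x ^ 2) * iteratedDeriv n (fun y => Real.exp (-(y ^ 2))) x

noncomputable def mehlerJ (n : ℕ) (x : ℝ) : ℂ :=
  ∫ t : ℝ, (2 * I * t) ^ n * Complex.exp (-t ^ 2 + 2 * I * t * x)

lemma mehler_norm_integrand (n : ℕ) (x : ℝ) (t : ℝ) :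
    ‖(2 * I * (t:ℂ)) ^ n * Complex.exp (-(t:ℂ) ^ 2 + 2 * I * t * x)‖
      = (2 * |t|) ^ n * Real.exp (-t ^ 2) := by
  rw [norm_mul, norm_pow, Complex.norm_exp]
  have h1 : ‖(2 * I * (t:ℂ))‖ = 2 * |t| := by
    simp [Complex.norm_real, abs_of_nonneg]
  have h2 : (-(t:ℂ) ^ 2 + 2 * I * t * x).re = -t ^ 2 := by
    rw [show -(t:ℂ) ^ 2 + 2 * I * t * x = Complex.ofReal (-t^2) + (2*t*x) * I by
      push_cast; ring]
    simp [← Complex.ofReal_pow]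
  rw [h1, h2]

lemma mehler_pointwise_bound (n : ℕ) (t : ℝ) :
    (2 * |t|) ^ n * Real.exp (-t ^ 2)
      ≤ (2:ℝ) ^ n * n.factorial * Real.exp (1/2) * Real.exp (-(1/2 : ℝ) * t ^ 2) := by
  have h1 : |t| ^ n ≤ (n.factorial : ℝ) * Real.exp |t| := by
    have := Real.pow_div_factorial_le_exp (x := |t|) (abs_nonneg t) n
    rw [div_le_iff₀ (by positivity)] at this
    linarith [this]
  have h2 : Real.exp |t| ≤ Real.exp (1/2 + t^2/2) := by
    apply Real.exp_le_exp.2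
    nlinarith [sq_nonneg (|t| - 1), sq_abs t]
  calc (2 * |t|) ^ n * Real.exp (-t ^ 2)
      = 2 ^ n * |t| ^ n * Real.exp (-t ^ 2) := by rw [mul_pow]
    _ ≤ 2 ^ n * ((n.factorial : ℝ) * Real.exp (1/2 + t^2/2)) * Real.exp (-t ^ 2) := by
        apply mul_le_mul_of_nonneg_right _ (Real.exp_pos _).le
        apply mul_le_mul_of_nonneg_left _ (by positivity)
        exact h1.trans (mul_le_mul_of_nonneg_left h2 (by positivity))
    _ = 2 ^ n * (n.factorial : ℝ) * (Real.exp (1/2 + t^2/2) * Real.exp (-t ^ 2)) := by ring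
    _ = (2:ℝ) ^ n * n.factorial * Real.exp (1/2) * Real.exp (-(1/2 : ℝ) * t ^ 2) := by
        rw [← Real.exp_add,
          show (1:ℝ)/2 + t^2/2 + -t^2 = 1/2 + -(1/2)*t^2 by ring, Real.exp_add]
        ring

lemma mehler_bound_integrable (n : ℕ) :
    Integrable (fun t : ℝ => (2 * |t|) ^ n * Real.exp (-t ^ 2)) := by
  have hi : Integrable (fun t : ℝ => Real.exp (-(1/2 : ℝ) * t ^ 2)) :=
    integrable_exp_neg_mul_sq (by norm_num)
  apply (hi.const_mul ((2:ℝ) ^ n * n.factorial * Real.exp (1/2))).mono'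
  · apply Continuous.aestronglyMeasurable; fun_prop
  · filter_upwards with t
    rw [Real.norm_eq_abs, abs_of_nonneg (by positivity)]
    exact mehler_pointwise_bound n t

lemma mehler_integrand_integrable (n : ℕ) (x : ℝ) :
    Integrable (fun t : ℝ => (2 * I * (t:ℂ)) ^ n * Complex.exp (-(t:ℂ) ^ 2 + 2 * I * t * x)) := by
  apply (mehler_bound_integrable n).mono'
  · apply Continuous.aestronglyMeasurable; fun_prop
  · filter_upwards with t
    rw [mehler_norm_integrand]

lemma mehlerJ_zero (x : ℝ) : mehlerJ 0 x = Real.sqrt π * Real.exp (-x ^ 2) := by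
  have h := integral_cexp_quadratic (b := (-1 : ℂ)) (by simp) (2 * I * x) 0
  have heq : (fun t : ℝ => (2 * I * (t:ℂ)) ^ 0 * Complex.exp (-(t:ℂ) ^ 2 + 2 * I * t * x))
      = fun t : ℝ => Complex.exp ((-1 : ℂ) * t ^ 2 + (2 * I * x) * t + 0) := by
    funext t
    rw [pow_zero, one_mul]
    congr 1
    ring
  rw [mehlerJ, heq, h]
  have h1 : ((π : ℂ) / -(-1)) ^ (1/2 : ℂ) = (Real.sqrt π : ℂ) := by
    rw [neg_neg, div_one, show ((1:ℂ)/2) = ((1/2 : ℝ) : ℂ) by norm_num,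
      ← Complex.ofReal_cpow pi_pos.le]
    norm_num [Real.sqrt_eq_rpow]
  have h2 : (0 : ℂ) - (2 * I * x) ^ 2 / (4 * -1) = ((-x ^ 2 : ℝ) : ℂ) := by
    rw [show (2 * I * (x:ℂ)) ^ 2 = 4 * I ^ 2 * x ^ 2 by ring, Complex.I_sq]
    push_cast
    ring
  rw [h1, h2, Complex.ofReal_exp]

lemma mehlerJ_hasDerivAt (n : ℕ) (x : ℝ) : HasDerivAt (mehlerJ n) (mehlerJ (n + 1) x) x := by
  have key := hasDerivAt_integral_of_dominated_loc_of_deriv_le (μ := (volume : Measure ℝ))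
    (F := fun (y : ℝ) (t : ℝ) => (2 * I * (t:ℂ)) ^ n * Complex.exp (-(t:ℂ) ^ 2 + 2 * I * t * y))
    (F' := fun (y : ℝ) (t : ℝ) =>
      (2 * I * (t:ℂ)) ^ (n+1) * Complex.exp (-(t:ℂ) ^ 2 + 2 * I * t * y))
    (x₀ := x) (s := Metric.ball x 1) (bound := fun t => (2 * |t|) ^ (n+1) * Real.exp (-t ^ 2))
    (Metric.ball_mem_nhds x one_pos)
    (by filter_upwards with y; exact (mehler_integrand_integrable n y).aestronglyMeasurable)
    (mehler_integrand_integrable n x)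
    (mehler_integrand_integrable (n+1) x).aestronglyMeasurable
    (by
      filter_upwards with t y _
      rw [mehler_norm_integrand])
    (mehler_bound_integrable (n+1))
    (by
      filter_upwards with t y _
      have hc : HasDerivAt (fun z : ℂ => (2 * I * (t:ℂ)) ^ n * Complex.exp (-(t:ℂ) ^ 2 + 2 * I * t * z))
          ((2 * I * (t:ℂ)) ^ (n+1) * Complex.exp (-(t:ℂ) ^ 2 + 2 * I * t * (y:ℂ))) (y : ℂ) := by
        have h0 : HasDerivAt (fun z : ℂ => -(t:ℂ) ^ 2 + 2 * I * t * z) (2 * I * t) (y : ℂ) := by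
          simpa using ((hasDerivAt_id (y:ℂ)).const_mul (2 * I * (t:ℂ))).const_add (-(t:ℂ) ^ 2)
        have h1 := (h0.cexp).const_mul ((2 * I * (t:ℂ)) ^ n)
        exact h1.congr_deriv (by ring)
      exact hc.comp_ofReal)
  exact key.2

lemma mehlerJ_succ (n : ℕ) : mehlerJ (n + 1) = deriv (mehlerJ n) := by
  funext x
  exact (mehlerJ_hasDerivAt n x).deriv.symm

lemma contDiff_gauss (m : ℕ) : ContDiff ℝ m (fun y : ℝ => Real.exp (-(y ^ 2))) := by fun_prop

lemma contDiff_gaussC (m : ℕ) : ContDiff ℝ m (fun y : ℝ => (Real.exp (-(y ^ 2)) : ℂ)) :=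
  Complex.ofRealCLM.contDiff.comp (contDiff_gauss m)

lemma ofReal_iteratedDeriv_gauss (n : ℕ) (x : ℝ) :
    ((iteratedDeriv n (fun y : ℝ => Real.exp (-(y ^ 2))) x : ℝ) : ℂ)
      = iteratedDeriv n (fun y : ℝ => (Real.exp (-(y ^ 2)) : ℂ)) x := by
  induction n generalizing x with
  | zero => simp
  | succ n ih =>
    rw [iteratedDeriv_succ, iteratedDeriv_succ]
    have hfun : iteratedDeriv n (fun y : ℝ => (Real.exp (-(y ^ 2)) : ℂ))
        = fun y => ((iteratedDeriv n (fun y : ℝ => Real.exp (-(y ^ 2))) y : ℝ) : ℂ) := by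
      funext y; rw [← ih]
    rw [hfun]
    have hd : HasDerivAt (iteratedDeriv n (fun y : ℝ => Real.exp (-(y ^ 2))))
        (deriv (iteratedDeriv n (fun y : ℝ => Real.exp (-(y ^ 2)))) x) x :=
      (((contDiff_gauss (n+1)).differentiable_iteratedDeriv n
        (by exact_mod_cast Nat.lt_succ_self n)) x).hasDerivAt
    exact (hd.ofReal_comp.deriv).symm

lemma iteratedDeriv_gaussC_differentiable (n : ℕ) :
    Differentiable ℝ (iteratedDeriv n (fun y : ℝ => (Real.exp (-(y ^ 2)) : ℂ))) :=
  (contDiff_gaussC (n+1)).differentiable_iteratedDeriv n (by exact_mod_cast Nat.lt_succ_self n)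

lemma mehlerJ_eq_iteratedDeriv (n : ℕ) (x : ℝ) :
    mehlerJ n x
      = (Real.sqrt π : ℂ) * iteratedDeriv n (fun y : ℝ => (Real.exp (-(y ^ 2)) : ℂ)) x := by
  induction n generalizing x with
  | zero =>
    rw [iteratedDeriv_zero, mehlerJ_zero]
  | succ n ih =>
    rw [mehlerJ_succ, iteratedDeriv_succ]
    have hfun : mehlerJ n
        = fun x => (Real.sqrt π : ℂ) * iteratedDeriv n (fun y : ℝ => (Real.exp (-(y ^ 2)) : ℂ)) x := by
      funext y; exact ih y
    rw [hfun, deriv_const_mul _ (iteratedDeriv_gaussC_differentiable n x)]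

lemma physHermite_eq_mehlerJ (n : ℕ) (x : ℝ) :
    (physHermite n x : ℂ) = (-1 : ℂ) ^ n * Real.exp (x ^ 2) * (Real.sqrt π : ℂ)⁻¹ * mehlerJ n x := by
  have hπ : (Real.sqrt π : ℂ) ≠ 0 := Complex.ofReal_ne_zero.mpr (by positivity)
  rw [physHermite, mehlerJ_eq_iteratedDeriv]
  push_cast
  rw [ofReal_iteratedDeriv_gauss]
  field_simp
  ring
  simp only [Complex.ofReal_exp, Complex.ofReal_neg, Complex.ofReal_pow]

lemma cpow_half_ofReal (x : ℝ) (hx : 0 ≤ x) : (x:ℂ) ^ (1/2 : ℂ) = (Real.sqrt x : ℂ) := by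
  rw [show ((1:ℂ)/2) = ((1/2:ℝ):ℂ) by norm_num, ← Complex.ofReal_cpow hx]
  norm_num [Real.sqrt_eq_rpow]

lemma norm_cexp_gauss (t x : ℝ) : ‖Complex.exp (-(t:ℂ) ^ 2 + 2 * I * t * x)‖ = Real.exp (-t ^ 2) := by
  simpa using mehler_norm_integrand 0 x t

noncomputable def mehlerF (s u v : ℝ) (n : ℕ) (p : ℝ × ℝ) : ℂ :=
  ((-2 * s * p.1 * p.2 : ℝ) : ℂ) ^ n / n.factorial *
    (Complex.exp (-(p.1:ℂ) ^ 2 + 2 * I * p.1 * u) * Complex.exp (-(p.2:ℂ) ^ 2 + 2 * I * p.2 * v))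

lemma mehlerF_norm (s u v : ℝ) (n : ℕ) (p : ℝ × ℝ) :
    ‖mehlerF s u v n p‖
      = |2 * s * p.1 * p.2| ^ n / n.factorial * (Real.exp (-p.1 ^ 2) * Real.exp (-p.2 ^ 2)) := by
  rw [mehlerF, norm_mul, norm_div, norm_pow, norm_mul, norm_cexp_gauss, norm_cexp_gauss]
  congr 2
  · rw [Complex.norm_real, Real.norm_eq_abs,
      show -2 * s * p.1 * p.2 = -(2 * s * p.1 * p.2) by ring, abs_neg]
  · simp

lemma mehlerF_meas (s u v : ℝ) (n : ℕ) :
    AEStronglyMeasurable (mehlerF s u v n) ((volume : Measure ℝ).prod volume) := by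
  apply Continuous.aestronglyMeasurable
  unfold mehlerF
  fun_prop

lemma mehlerF_integral (s u v : ℝ) (n : ℕ) :
    ∫ p, mehlerF s u v n p ∂((volume : Measure ℝ).prod volume)
      = s ^ n / (2 ^ n * n.factorial) * (mehlerJ n u * mehlerJ n v) := by
  have hfe : mehlerF s u v n = fun p : ℝ × ℝ => (((s:ℂ)/2) ^ n / n.factorial) *
      (((2 * I * (p.1:ℂ)) ^ n * Complex.exp (-(p.1:ℂ) ^ 2 + 2 * I * p.1 * u)) *
        ((2 * I * (p.2:ℂ)) ^ n * Complex.exp (-(p.2:ℂ) ^ 2 + 2 * I * p.2 * v))) := by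
    funext p
    rw [mehlerF]
    have hz : ((-2 * s * p.1 * p.2 : ℝ) : ℂ) = ((s:ℂ)/2) * (2 * I * p.1) * (2 * I * p.2) := by
      push_cast
      linear_combination (-2 * (s:ℂ) * (p.1:ℂ) * (p.2:ℂ)) * Complex.I_sq
    rw [hz]
    field_simp
    ring_nf
    have h4 : (4:ℂ) ^ n = 2 ^ (n * 2) := by rw [mul_comm n 2, pow_mul]; norm_num
    rw [show (2:ℂ)^(n*2) = 2^n*2^n by rw [← pow_add]; ring_nf, div_pow, one_pow]
    field_simp
  have hpm := MeasureTheory.integral_prod_mul (μ := (volume : Measure ℝ)) (ν := (volume : Measure ℝ))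
    (f := fun t : ℝ => (2 * I * (t:ℂ)) ^ n * Complex.exp (-(t:ℂ) ^ 2 + 2 * I * t * u))
    (g := fun r : ℝ => (2 * I * (r:ℂ)) ^ n * Complex.exp (-(r:ℂ) ^ 2 + 2 * I * r * v))
  rw [hfe, MeasureTheory.integral_const_mul, hpm]
  rw [show ∫ t : ℝ, (2 * I * (t:ℂ)) ^ n * Complex.exp (-(t:ℂ) ^ 2 + 2 * I * t * u) = mehlerJ n u from rfl,
    show ∫ t : ℝ, (2 * I * (t:ℂ)) ^ n * Complex.exp (-(t:ℂ) ^ 2 + 2 * I * t * v) = mehlerJ n v from rfl]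
  congr 1
  rw [div_pow]
  ring

lemma mehlerF_tsum (s u v : ℝ) (p : ℝ × ℝ) :
    ∑' n, mehlerF s u v n p
      = Complex.exp ((-1:ℂ) * p.2 ^ 2 + (2 * I * v - 2 * s * p.1) * p.2
          + ((-1) * p.1 ^ 2 + 2 * I * u * p.1)) := by
  simp only [mehlerF]
  rw [tsum_mul_right]
  have h : ∑' n : ℕ, ((-2 * s * p.1 * p.2 : ℝ) : ℂ) ^ n / n.factorial
      = Complex.exp ((-2 * s * p.1 * p.2 : ℝ) : ℂ) := by
    rw [Complex.exp_eq_exp_ℂ, NormedSpace.exp_eq_tsum_div]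
  rw [h, ← Complex.exp_add, ← Complex.exp_add]
  congr 1
  push_cast
  ring

lemma mehlerF_summable_norm (s u v : ℝ) (p : ℝ × ℝ) :
    Summable (fun n => ‖mehlerF s u v n p‖) := by
  simp only [mehlerF_norm]
  exact (Real.summable_pow_div_factorial _).mul_right _

lemma mehlerF_tsum_norm (s u v : ℝ) (p : ℝ × ℝ) :
    ∑' n, ‖mehlerF s u v n p‖
      = Real.exp |2 * s * p.1 * p.2| * (Real.exp (-p.1 ^ 2) * Real.exp (-p.2 ^ 2)) := by
  simp only [mehlerF_norm]
  rw [tsum_mul_right]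
  congr 1
  rw [Real.exp_eq_exp_ℝ, NormedSpace.exp_eq_tsum_div]

lemma mehler_exp_bound (s : ℝ) (hs : |s| < 1) (t r : ℝ) :
    Real.exp |2 * s * t * r| * (Real.exp (-t ^ 2) * Real.exp (-r ^ 2))
      ≤ Real.exp (-(1 - |s|) * t ^ 2) * Real.exp (-(1 - |s|) * r ^ 2) := by
  rw [← Real.exp_add, ← Real.exp_add, ← Real.exp_add]
  apply Real.exp_le_exp.2
  have h1 : |2 * s * t * r| ≤ |s| * (t ^ 2 + r ^ 2) := by
    have h2 : |2 * s * t * r| = 2 * |s| * |t| * |r| := by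
      rw [abs_mul, abs_mul, abs_mul]
      norm_num
    rw [h2]
    nlinarith [sq_nonneg (|t| - |r|), sq_abs t, sq_abs r, abs_nonneg s, abs_nonneg t, abs_nonneg r]
  nlinarith [abs_nonneg s]

lemma mehlerG_integrable (s : ℝ) (hs : |s| < 1) :
    Integrable (fun p : ℝ × ℝ => Real.exp (-(1 - |s|) * p.1 ^ 2) * Real.exp (-(1 - |s|) * p.2 ^ 2))
      ((volume : Measure ℝ).prod volume) := by
  have h : (0:ℝ) < 1 - |s| := by linarith
  exact (integrable_exp_neg_mul_sq h).mul_prod (integrable_exp_neg_mul_sq h)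

lemma mehler_swap (s u v : ℝ) (hs : |s| < 1) :
    ∫ p, (∑' n, mehlerF s u v n p) ∂((volume : Measure ℝ).prod volume)
      = ∑' n, ∫ p, mehlerF s u v n p ∂((volume : Measure ℝ).prod volume) := by
  apply integral_tsum (fun n => mehlerF_meas s u v n)
  rw [← lintegral_tsum (fun n => (mehlerF_meas s u v n).enorm)]
  have hle : ∀ p : ℝ × ℝ, (∑' n, (‖mehlerF s u v n p‖₊ : ℝ≥0∞))
      ≤ ENNReal.ofReal (Real.exp (-(1 - |s|) * p.1 ^ 2) * Real.exp (-(1 - |s|) * p.2 ^ 2)) := by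
    intro p
    have h1 : ∑' n, (‖mehlerF s u v n p‖₊ : ℝ≥0∞) = ENNReal.ofReal (∑' n, ‖mehlerF s u v n p‖) := by
      rw [ENNReal.ofReal_tsum_of_nonneg (fun n => norm_nonneg _) (mehlerF_summable_norm s u v p)]
      congr 1
      funext n
      exact (ofReal_norm _).symm
    rw [h1, mehlerF_tsum_norm]
    exact ENNReal.ofReal_le_ofReal (mehler_exp_bound s hs p.1 p.2)
  have hfin : (∫⁻ p, ENNReal.ofReal
      (Real.exp (-(1 - |s|) * p.1 ^ 2) * Real.exp (-(1 - |s|) * p.2 ^ 2))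
       ∂((volume : Measure ℝ).prod volume)) < ⊤ := by
    have heq : ∀ p : ℝ × ℝ, ENNReal.ofReal
        (Real.exp (-(1 - |s|) * p.1 ^ 2) * Real.exp (-(1 - |s|) * p.2 ^ 2))
        = (‖Real.exp (-(1 - |s|) * p.1 ^ 2) * Real.exp (-(1 - |s|) * p.2 ^ 2)‖₊ : ℝ≥0∞) := by
      intro p
      exact (Real.enorm_eq_ofReal (by positivity)).symm
    simp_rw [heq]
    exact (mehlerG_integrable s hs).2
  exact ((lintegral_mono hle).trans_lt hfin).ne

lemma abs_cross_bound (s t r : ℝ) : |2 * s * t * r| ≤ |s| * (t ^ 2 + r ^ 2) := by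
  have h2 : |2 * s * t * r| = 2 * |s| * |t| * |r| := by
    rw [abs_mul, abs_mul, abs_mul]
    norm_num
  rw [h2]
  nlinarith [sq_nonneg (|t| - |r|), sq_abs t, sq_abs r, abs_nonneg s, abs_nonneg t, abs_nonneg r]

lemma mehler_integral_eval (s u v : ℝ) (hs : |s| < 1) :
    ∫ p : ℝ × ℝ, Complex.exp ((-1:ℂ) * p.2 ^ 2 + (2 * I * v - 2 * s * p.1) * p.2
        + ((-1) * p.1 ^ 2 + 2 * I * u * p.1)) ∂((volume : Measure ℝ).prod volume)
      = (Real.sqrt π : ℂ) * Real.sqrt (π / (1 - s ^ 2))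
          * Complex.exp (((-v ^ 2 - (u - s * v) ^ 2 / (1 - s ^ 2) : ℝ) : ℂ)) := by
  have hs2 : s ^ 2 < 1 := by nlinarith [sq_abs s, abs_nonneg s]
  have h1 : (0:ℝ) < 1 - s ^ 2 := by linarith
  have hnorm : ∀ p : ℝ × ℝ, ‖Complex.exp ((-1:ℂ) * p.2 ^ 2 + (2 * I * v - 2 * s * p.1) * p.2
      + ((-1) * p.1 ^ 2 + 2 * I * u * p.1))‖
      = Real.exp (-p.1 ^ 2 - p.2 ^ 2 - 2 * s * p.1 * p.2) := by
    intro p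
    rw [show (-1:ℂ) * p.2 ^ 2 + (2 * I * v - 2 * s * p.1) * p.2 + ((-1) * p.1 ^ 2 + 2 * I * u * p.1)
        = ((-p.1 ^ 2 - p.2 ^ 2 - 2 * s * p.1 * p.2 : ℝ) : ℂ) + ((2 * v * p.2 + 2 * u * p.1 : ℝ) : ℂ) * I by
      push_cast; ring]
    rw [Complex.norm_exp]
    simp [← Complex.ofReal_pow]
  have hInt : Integrable (fun p : ℝ × ℝ => Complex.exp ((-1:ℂ) * p.2 ^ 2
      + (2 * I * v - 2 * s * p.1) * p.2 + ((-1) * p.1 ^ 2 + 2 * I * u * p.1)))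
      ((volume : Measure ℝ).prod volume) := by
    apply (mehlerG_integrable s hs).mono'
    · apply Continuous.aestronglyMeasurable; fun_prop
    · filter_upwards with p
      rw [hnorm, ← Real.exp_add]
      apply Real.exp_le_exp.2
      have hb := abs_cross_bound s p.1 p.2
      have hb2 := neg_abs_le (2 * s * p.1 * p.2)
      nlinarith
  rw [MeasureTheory.integral_prod _ hInt]
  have hinner : ∀ t : ℝ,
      (∫ r : ℝ, Complex.exp ((-1:ℂ) * r ^ 2 + (2 * I * v - 2 * s * t) * r
        + ((-1) * t ^ 2 + 2 * I * u * t)))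
      = ((π:ℂ)) ^ (1/2 : ℂ) * Complex.exp (((s ^ 2 - 1 : ℝ) : ℂ) * t ^ 2
          + (2 * I * (u - s * v)) * t + ((-v ^ 2 : ℝ) : ℂ)) := by
    intro t
    rw [integral_cexp_quadratic (by norm_num : (-1:ℂ).re < 0) (2 * I * v - 2 * s * t)
      ((-1:ℂ) * t ^ 2 + 2 * I * u * t)]
    congr 1
    · norm_num
    · congr 1
      push_cast
      linear_combination (v:ℂ) ^ 2 * Complex.I_sq
  simp_rw [hinner]
  rw [MeasureTheory.integral_const_mul]
  have hb' : (((s ^ 2 - 1 : ℝ) : ℂ)).re < 0 := by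
    rw [Complex.ofReal_re]; linarith
  rw [integral_cexp_quadratic hb' (2 * I * (u - s * v)) ((-v ^ 2 : ℝ) : ℂ)]
  have hfac : ((π:ℂ) / -(((s ^ 2 - 1 : ℝ) : ℂ))) = (((π / (1 - s ^ 2) : ℝ)) : ℂ) := by
    push_cast; ring
  rw [hfac, cpow_half_ofReal π pi_pos.le,
    cpow_half_ofReal (π / (1 - s ^ 2)) (by positivity)]
  rw [← mul_assoc]
  congr 2
  have h3 : ((1:ℂ) - (s:ℂ) ^ 2) ≠ 0 := by
    intro h
    have h' : ((1 - s ^ 2 : ℝ) : ℂ) = 0 := by push_cast; linear_combination h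
    rw [Complex.ofReal_eq_zero] at h'
    linarith
  have h2' : ((s:ℂ) ^ 2 - 1) ≠ 0 := by
    intro h
    apply h3
    linear_combination -h
  rw [show (2 * I * ((u:ℂ) - s * v)) ^ 2 = 4 * I ^ 2 * ((u:ℂ) - s * v) ^ 2 by ring, Complex.I_sq,
    show ((s ^ 2 - 1 : ℝ) : ℂ) = (s:ℂ) ^ 2 - 1 by push_cast; ring,
    show ((-v ^ 2 - (u - s * v) ^ 2 / (1 - s ^ 2) : ℝ) : ℂ)
      = -(v:ℂ) ^ 2 - ((u:ℂ) - s * v) ^ 2 / (1 - (s:ℂ) ^ 2) by push_cast; ring,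
    show ((-v ^ 2 : ℝ) : ℂ) = -(v:ℂ) ^ 2 by push_cast; ring]
  field_simp
  ring

lemma mehler_final_real (s u v : ℝ) (hs2 : s ^ 2 < 1) :
    Real.exp (u ^ 2) * Real.exp (v ^ 2) / π
        * (Real.sqrt π * Real.sqrt (π / (1 - s ^ 2))
            * Real.exp (-v ^ 2 - (u - s * v) ^ 2 / (1 - s ^ 2)))
      = 1 / Real.sqrt (1 - s ^ 2)
          * Real.exp ((2 * u * v * s - (u ^ 2 + v ^ 2) * s ^ 2) / (1 - s ^ 2)) := by
  have h1 : (0:ℝ) < 1 - s ^ 2 := by linarith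
  rw [Real.sqrt_div pi_pos.le]
  have hexp : u ^ 2 + v ^ 2 + (-v ^ 2 - (u - s * v) ^ 2 / (1 - s ^ 2))
      = (2 * u * v * s - (u ^ 2 + v ^ 2) * s ^ 2) / (1 - s ^ 2) := by
    field_simp
    ring
  have hcomb : Real.exp (u ^ 2) * Real.exp (v ^ 2) * Real.exp (-v ^ 2 - (u - s * v) ^ 2 / (1 - s ^ 2))
      = Real.exp ((2 * u * v * s - (u ^ 2 + v ^ 2) * s ^ 2) / (1 - s ^ 2)) := by
    rw [← Real.exp_add, ← Real.exp_add, hexp]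
  have hstep : Real.exp (u ^ 2) * Real.exp (v ^ 2) / π
      * (Real.sqrt π * (Real.sqrt π / Real.sqrt (1 - s ^ 2))
        * Real.exp (-v ^ 2 - (u - s * v) ^ 2 / (1 - s ^ 2)))
      = (Real.sqrt π * Real.sqrt π / π)
        * (Real.exp (u ^ 2) * Real.exp (v ^ 2) * Real.exp (-v ^ 2 - (u - s * v) ^ 2 / (1 - s ^ 2)))
        * (1 / Real.sqrt (1 - s ^ 2)) := by ring
  rw [hstep, Real.mul_self_sqrt pi_pos.le, div_self pi_ne_zero, one_mul, hcomb]
  ring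

/-- The Mehler/Hille kernel formula: for `|s| < 1` and all real `u, v`,
`∑_{n} H_n(u) H_n(v) s^n / (2^n n!) = (1-s²)^{-1/2} exp((2uvs - (u²+v²)s²)/(1-s²))`. -/
theorem mehler_formula (s u v : ℝ) (hs : |s| < 1) :
    ∑' n : ℕ, physHermite n u * physHermite n v * s ^ n / (2 ^ n * n.factorial) =
      (1 / Real.sqrt (1 - s ^ 2)) *
        Real.exp ((2 * u * v * s - (u ^ 2 + v ^ 2) * s ^ 2) / (1 - s ^ 2)) := by
  have hs2 : s ^ 2 < 1 := by nlinarith [sq_abs s, abs_nonneg s]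
  have h1 : (0:ℝ) < 1 - s ^ 2 := by linarith
  rw [← Complex.ofReal_inj, Complex.ofReal_tsum]
  have hterm : ∀ n : ℕ,
      ((physHermite n u * physHermite n v * s ^ n / (2 ^ n * n.factorial) : ℝ) : ℂ)
      = ((Real.exp (u ^ 2) * Real.exp (v ^ 2) / π : ℝ) : ℂ)
        * ∫ p, mehlerF s u v n p ∂((volume : Measure ℝ).prod volume) := by
    intro n
    rw [mehlerF_integral]
    push_cast
    rw [physHermite_eq_mehlerJ, physHermite_eq_mehlerJ]
    have hsp : ((Real.sqrt π : ℝ) : ℂ) * ((Real.sqrt π : ℝ) : ℂ) = ((π : ℝ) : ℂ) := by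
      norm_cast
      exact Real.mul_self_sqrt pi_pos.le
    have hneg : ((-1:ℂ)) ^ n * (-1) ^ n = 1 := by
      rw [← pow_add]
      exact Even.neg_one_pow ⟨n, rfl⟩
    have hπ0 : ((π:ℝ) : ℂ) ≠ 0 := Complex.ofReal_ne_zero.mpr pi_ne_zero
    have hsπ0 : ((Real.sqrt π : ℝ) : ℂ) ≠ 0 := Complex.ofReal_ne_zero.mpr (by positivity)
    field_simp
    rw [pow_two (((Real.sqrt π : ℝ) : ℂ)), hsp]
    push_cast
    congr 1
    linear_combination (Complex.exp ((u:ℂ) ^ 2) * Complex.exp ((v:ℂ) ^ 2) * mehlerJ n u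
      * mehlerJ n v * (s:ℂ) ^ n * (π:ℂ)) * hneg
  rw [tsum_congr hterm, tsum_mul_left, ← mehler_swap s u v hs]
  simp_rw [mehlerF_tsum]
  rw [mehler_integral_eval s u v hs]
  rw [← Complex.ofReal_exp, ← Complex.ofReal_mul, ← Complex.ofReal_mul, ← Complex.ofReal_mul,
    Complex.ofReal_inj]
  exact mehler_final_real s u v hs2
end
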